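/- Let n ≥ 1 and α ∈ ℝ. The n×n Jordan block J_n(α) is dissipative (i.e. ⟨J_n(α)a, a⟩ ≤ 0 for all a ∈ ℝⁿ with the Euclidean inner product) if and only if α ≤ -cos(π/(n+1)). -/

import Mathlib

open Real Matrix

/-- The `n × n` Jordan block with `x` on the main diagonal and `1` on the superdiagonal. -/
noncomputable def jordanBlock (n : ℕ) (x : ℝ) : Matrix (Fin n) (Fin n) ℝ :=
  Matrix.of fun i j => if (j : ℕ) = (i : ℕ) then x else if (j : ℕ) = (i : ℕ) + 1 then 1 else 0

private def bb (n : ℕ) (a : Fin n → ℝ) (k : ℕ) : ℝ :=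
  if h : k < n then a ⟨k, h⟩ else 0

private lemma amgm (u v x y : ℝ) (hu : 0 < u) (hv : 0 < v) :
    x * y ≤ v / (2*u) * x^2 + u / (2*v) * y^2 := by
  rw [div_mul_eq_mul_div, div_mul_eq_mul_div,
    div_add_div _ _ (by positivity) (by positivity), le_div_iff₀ (by positivity)]
  nlinarith [sq_nonneg (v*x - u*y)]

private lemma sinrec (θ : ℝ) (k : ℕ) :
    Real.sin ((k+2) * θ) + Real.sin (k * θ) = 2 * Real.cos θ * Real.sin ((k+1) * θ) := by
  have h1 : ((k:ℝ)+2) * θ = (k+1)*θ + θ := by ring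
  have h2 : (k:ℝ) * θ = (k+1)*θ - θ := by ring
  rw [h1, h2, Real.sin_add, Real.sin_sub]; ring

private lemma hform (n : ℕ) (α : ℝ) (a : Fin n → ℝ) :
    (jordanBlock n α).mulVec a ⬝ᵥ a =
      ∑ k ∈ Finset.range n, (α * bb n a k + bb n a (k+1)) * bb n a k := by
  rw [← Fin.sum_univ_eq_sum_range, dotProduct]
  refine Finset.sum_congr rfl fun i _ => ?_
  have hbi : bb n a i = a i := by simp [bb, i.isLt]
  have hmv : (jordanBlock n α).mulVec a i = α * a i + bb n a (i+1) := by
    rw [mulVec, dotProduct]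
    have split : ∀ j : Fin n,
        jordanBlock n α i j * a j =
          (if j = i then α * a j else 0) + (if (j:ℕ) = (i:ℕ)+1 then a j else 0) := by
      intro j
      simp only [jordanBlock, Matrix.of_apply, Fin.ext_iff]
      split_ifs <;> first | omega | ring
    rw [Finset.sum_congr rfl fun j _ => split j, Finset.sum_add_distrib,
      Finset.sum_ite_eq' Finset.univ i (fun j => α * a j)]
    simp only [Finset.mem_univ, if_true]
    congr 1
    by_cases h : (i:ℕ)+1 < n
    · have : ∀ j : Fin n, ((j:ℕ) = (i:ℕ)+1) ↔ j = (⟨(i:ℕ)+1, h⟩ : Fin n) := by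
        intro j; simp [Fin.ext_iff]
      simp only [this]
      rw [Finset.sum_ite_eq' Finset.univ (⟨(i:ℕ)+1, h⟩ : Fin n) (fun j => a j)]
      simp [bb, h]
    · have : ∀ j : Fin n, ¬((j:ℕ) = (i:ℕ)+1) := fun j hj => h (hj ▸ j.isLt)
      simp [this, bb, h]
  rw [hmv, hbi]


/-- `J_n(α)` is dissipative iff `α ≤ -cos(π/(n+1))`. -/
theorem jordanBlock_dissipative_iff (n : ℕ) (hn : 1 ≤ n) (α : ℝ) :
    (∀ a : Fin n → ℝ, (jordanBlock n α).mulVec a ⬝ᵥ a ≤ 0) ↔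
      α ≤ -Real.cos (π / (n + 1)) := by
  obtain ⟨m, rfl⟩ : ∃ m, n = m + 1 := ⟨n - 1, by omega⟩
  set θ : ℝ := π / (m + 2) with hθdef
  have hgoal : (π / ((m + 1 : ℕ) + 1) : ℝ) = θ := by rw [hθdef]; push_cast; ring_nf
  rw [hgoal]
  set t : ℕ → ℝ := fun k => Real.sin (k * θ) with htdef
  have hm2 : (0:ℝ) < (m:ℝ) + 2 := by positivity
  have hθpos : 0 < θ := div_pos Real.pi_pos hm2
  have htpos : ∀ k : ℕ, 1 ≤ k → k ≤ m + 1 → 0 < t k := by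
    intro k h1 h2
    have hk0 : (0:ℝ) < k := by exact_mod_cast h1
    apply Real.sin_pos_of_pos_of_lt_pi (mul_pos hk0 hθpos)
    have hk : (k:ℝ) < m + 2 := by exact_mod_cast (by omega : k < m + 2)
    calc (k:ℝ) * θ < ((m:ℝ)+2) * θ := by exact mul_lt_mul_of_pos_right hk hθpos
      _ = π := by rw [hθdef]; field_simp
  have ht0 : t 0 = 0 := by simp [htdef]
  have htm2 : t (m+2) = 0 := by
    show Real.sin ((m+2 : ℕ) * θ) = 0
    have : ((m+2 : ℕ) : ℝ) * θ = π := by rw [hθdef]; push_cast; field_simp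
    rw [this, Real.sin_pi]
  have hrec : ∀ k : ℕ, t (k+2) + t k = 2 * Real.cos θ * t (k+1) := by
    intro k
    show Real.sin ((k+2 : ℕ) * θ) + Real.sin ((k:ℕ) * θ) = 2 * Real.cos θ * Real.sin ((k+1 : ℕ) * θ)
    push_cast
    exact sinrec θ k
  constructor
  · -- forward
    intro H
    set a : Fin (m+1) → ℝ := fun i => t ((i:ℕ)+1) with hadef
    have hba : ∀ k, k ≤ m+1 → bb (m+1) a k = t (k+1) := by
      intro k hk
      by_cases h : k < m+1
      · simp [bb, h, hadef]
      · have hk1 : k = m+1 := by omega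
        rw [bb, dif_neg h, hk1, htm2]
    have hH := H a
    rw [hform] at hH
    have hsum : ∑ k ∈ Finset.range (m+1),
        (α * bb (m+1) a k + bb (m+1) a (k+1)) * bb (m+1) a k
        = ∑ k ∈ Finset.range (m+1), (α * t (k+1) + t (k+2)) * t (k+1) := by
      refine Finset.sum_congr rfl fun k hk => ?_
      have hk' : k < m+1 := Finset.mem_range.mp hk
      rw [hba k (by omega), hba (k+1) (by omega)]
    rw [hsum] at hH
    -- identity : cross sum = cos θ * S
    set S : ℝ := ∑ k ∈ Finset.range (m+1), t (k+1)^2 with hSdef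
    set C : ℝ := ∑ k ∈ Finset.range (m+1), t (k+2) * t (k+1) with hCdef
    have hsplit : ∑ k ∈ Finset.range (m+1), (α * t (k+1) + t (k+2)) * t (k+1)
        = α * S + C := by
      rw [hSdef, hCdef, Finset.mul_sum, ← Finset.sum_add_distrib]
      exact Finset.sum_congr rfl fun k _ => by ring
    rw [hsplit] at hH
    have hD : ∑ k ∈ Finset.range (m+1), t k * t (k+1) = C := by
      rw [Finset.sum_range_succ' (fun k => t k * t (k+1)) m, hCdef,
        Finset.sum_range_succ (fun k => t (k+2) * t (k+1)) m, htm2, ht0]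
      simp only [zero_mul, mul_zero, add_zero]
      exact Finset.sum_congr rfl fun k _ => mul_comm (t (k+1)) (t (k+1+1))
    have hid : 2 * Real.cos θ * S = C + ∑ k ∈ Finset.range (m+1), t k * t (k+1) := by
      rw [hSdef, hCdef, Finset.mul_sum, ← Finset.sum_add_distrib]
      refine Finset.sum_congr rfl fun k _ => ?_
      linear_combination (-(t (k+1))) * hrec k
    rw [hD] at hid
    have hC : C = Real.cos θ * S := by linarith
    have hSpos : 0 < S := by
      have h1 : t 1 ^ 2 ≤ S := by
        rw [hSdef]
        exact Finset.single_le_sum (f := fun k => t (k+1)^2)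
          (fun i _ => sq_nonneg _) (Finset.mem_range.mpr (by omega : 0 < m+1))
      have := htpos 1 le_rfl (by omega)
      nlinarith
    rw [hC] at hH
    have h1 : α + Real.cos θ ≤ 0 := by nlinarith
    linarith
  · -- backward
    intro hα a
    rw [hform]
    set b : ℕ → ℝ := bb (m+1) a with hbdef
    have hbm1 : b (m+1) = 0 := by rw [hbdef, bb, dif_neg (by omega)]
    set Sb : ℝ := ∑ k ∈ Finset.range (m+1), b k ^ 2 with hSbdef
    have hSbnn : 0 ≤ Sb := Finset.sum_nonneg fun k _ => sq_nonneg _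
    have key : ∑ k ∈ Finset.range (m+1), b (k+1) * b k ≤ Real.cos θ * Sb := by
      rw [Finset.sum_range_succ, hbm1, zero_mul, add_zero]
      have step1 : ∑ k ∈ Finset.range m, b (k+1) * b k
          ≤ ∑ k ∈ Finset.range m,
            (t (k+2) / (2 * t (k+1)) * b k ^ 2 + t (k+1) / (2 * t (k+2)) * b (k+1) ^ 2) := by
        refine Finset.sum_le_sum fun k hk => ?_
        have hk' : k < m := Finset.mem_range.mp hk
        have hu := htpos (k+1) (by omega) (by omega)
        have hv := htpos (k+2) (by omega) (by omega)
        rw [mul_comm]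
        exact amgm _ _ _ _ hu hv
      have step2 : ∑ k ∈ Finset.range m,
          (t (k+2) / (2 * t (k+1)) * b k ^ 2 + t (k+1) / (2 * t (k+2)) * b (k+1) ^ 2)
          = Real.cos θ * Sb := by
        rw [hSbdef, Finset.mul_sum]
        have percos : ∀ k < m+1, Real.cos θ * b k ^ 2
            = t (k+2) / (2 * t (k+1)) * b k ^ 2 + t k / (2 * t (k+1)) * b k ^ 2 := by
          intro k hk
          have hu := htpos (k+1) (by omega) (by omega)
          have hu' : t (k+1) ≠ 0 := ne_of_gt hu
          rw [div_mul_eq_mul_div, div_mul_eq_mul_div, ← add_div, ← add_mul, hrec k]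
          field_simp
        rw [Finset.sum_congr rfl fun k hk => percos k (Finset.mem_range.mp hk),
          Finset.sum_add_distrib, Finset.sum_add_distrib,
          Finset.sum_range_succ (fun k => t (k+2) / (2 * t (k+1)) * b k ^ 2) m,
          Finset.sum_range_succ' (fun k => t k / (2 * t (k+1)) * b k ^ 2) m,
          htm2, ht0]
        norm_num
      linarith [step1, step2.symm.le]
    have hfin : ∑ k ∈ Finset.range (m+1), (α * b k + b (k+1)) * b k
        = α * Sb + ∑ k ∈ Finset.range (m+1), b (k+1) * b k := by
      rw [hSbdef, Finset.mul_sum, ← Finset.sum_add_distrib]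
      exact Finset.sum_congr rfl fun k _ => by ring
    rw [hfin]
    have hcos : α + Real.cos θ ≤ 0 := by linarith
    nlinarith [key, hSbnn, mul_nonneg (neg_nonneg.mpr hcos) hSbnn]
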